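/- Let p>1 and let (λ_n)_{n≥1} be a positive real sequence with Λ_n = Σ_{k=1}^n λ_k. Suppose L = sup_{n≥1} ( Λ_{n+1}/λ_{n+1} − Λ_n/λ_n ) satisfies L < p. Then for every positive real sequence (x_n)_{n≥1} for which all the series below converge, setting A_n = (1/Λ_n) Σ_{k=1}^n λ_k x_k, one has Σ_{n=1}^∞ A_n^p ≤ ( p/(p−L) ) Σ_{n=1}^∞ x_n A_n^{p−1}. -/

import Mathlib

/-- Young's inequality in the form we need. -/
lemma young_aux (p a b : ℝ) (hp : 1 < p) (ha : 0 < a) (hb : 0 < b) :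
    p * (a * b ^ (p - 1)) ≤ a ^ p + (p - 1) * b ^ p := by
  have hp0 : 0 < p := by linarith
  have h := Real.geom_mean_le_arith_mean2_weighted
    (w₁ := 1 / p) (w₂ := (p - 1) / p) (p₁ := a ^ p) (p₂ := b ^ p)
    (by positivity) (div_nonneg (by linarith) hp0.le)
    (Real.rpow_pos_of_pos ha p).le (Real.rpow_pos_of_pos hb p).le
    (by field_simp; ring)
  have e1 : (a ^ p) ^ (1 / p) = a := by
    rw [← Real.rpow_mul ha.le, mul_one_div_cancel hp0.ne', Real.rpow_one]
  have e2 : (b ^ p) ^ ((p - 1) / p) = b ^ (p - 1) := by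
    rw [← Real.rpow_mul hb.le, mul_div_cancel₀ _ hp0.ne']
  rw [e1, e2] at h
  have := mul_le_mul_of_nonneg_left h hp0.le
  calc p * (a * b ^ (p - 1)) = p * (a * b ^ (p - 1)) := rfl
    _ ≤ p * (1 / p * a ^ p + (p - 1) / p * b ^ p) := this
    _ = a ^ p + (p - 1) * b ^ p := by field_simp

/-- The key per-step algebraic inequality. -/
lemma step_aux (p c L lN lN2 ΛN ΛN1 a b P Q R X : ℝ)
    (hp : 1 < p) (hc : 0 < c) (hcp : c * (p - L) = p)
    (hlN : 0 < lN) (hlN2 : 0 < lN2) (hΛN : 0 < ΛN)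
    (hrec : ΛN1 = ΛN + lN)
    (hd : (ΛN1 + lN2) / lN2 - ΛN1 / lN ≤ L)
    (hQ : 0 < Q)
    (hX : lN * X = ΛN1 * b - ΛN * a)
    (hRb : R * b = Q)
    (hY : p * (a * R) ≤ P + (p - 1) * Q) :
    Q + c / p * (ΛN1 / lN2) * Q ≤ c / p * (ΛN / lN) * P + c * (X * R) := by
  have hp0 : 0 < p := by linarith
  have hv : ΛN1 * lN + lN * lN2 ≤ L * (lN * lN2) + ΛN1 * lN2 := by
    rw [div_sub_div _ _ hlN2.ne' hlN.ne', div_le_iff₀ (by positivity)] at hd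
    nlinarith [hd]
  have h1 : lN * (X * R) = ΛN1 * Q - ΛN * (a * R) := by
    calc lN * (X * R) = (lN * X) * R := by ring
      _ = (ΛN1 * b - ΛN * a) * R := by rw [hX]
      _ = ΛN1 * (R * b) - ΛN * (a * R) := by ring
      _ = ΛN1 * Q - ΛN * (a * R) := by rw [hRb]
  have F1 : p * ΛN1 * Q - ΛN * P - (p - 1) * (ΛN * Q) ≤ p * (lN * (X * R)) := by
    have h1' : p * (lN * (X * R)) = p * (ΛN1 * Q) - ΛN * (p * (a * R)) := by
      rw [h1]; ring
    nlinarith [mul_le_mul_of_nonneg_left hY hΛN.le]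
  refine le_of_mul_le_mul_right ?_ (show (0:ℝ) < p * lN * lN2 by positivity)
  have e1 : (Q + c / p * (ΛN1 / lN2) * Q) * (p * lN * lN2)
      = p * lN * lN2 * Q + c * lN * (ΛN1 * Q) := by
    field_simp
  have e2 : (c / p * (ΛN / lN) * P + c * (X * R)) * (p * lN * lN2)
      = c * lN2 * (ΛN * P) + (c * lN2) * (p * (lN * (X * R))) := by
    field_simp
  rw [e1, e2]
  have F1' := mul_le_mul_of_nonneg_left F1 (by positivity : (0:ℝ) ≤ c * lN2)
  have F2' := mul_le_mul_of_nonneg_left hv (by positivity : (0:ℝ) ≤ c * Q)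
  have F3' : c * (p - L) * (lN * lN2 * Q) = p * (lN * lN2 * Q) := by rw [hcp]
  subst hrec
  nlinarith [F1', F2', F3']

lemma sum_range_shift (f : ℕ → ℝ) (N : ℕ) :
    ∑ n ∈ Finset.range N, f (n + 1) = ∑ n ∈ Finset.Icc 1 N, f n := by
  induction N with
  | zero => simp
  | succ N ih => rw [Finset.sum_range_succ, ih,
      Finset.sum_Icc_succ_top (Nat.le_add_left 1 N)]

/-- strengthened form of Cartlidge's theorem, inequality (1.40). -/
theorem stmt_14 (p : ℝ) (hp : 1 < p)
    (l x : ℕ → ℝ) (hl : ∀ n, 1 ≤ n → 0 < l n) (hx : ∀ n, 1 ≤ n → 0 < x n)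
    (Λ : ℕ → ℝ) (hΛ : ∀ n, Λ n = ∑ k ∈ Finset.Icc 1 n, l k)
    (L : ℝ)
    (hL : IsLUB (Set.range fun n : ℕ => Λ (n + 2) / l (n + 2) - Λ (n + 1) / l (n + 1)) L)
    (hLp : L < p)
    (A : ℕ → ℝ) (hA : ∀ n, 1 ≤ n → A n = (1 / Λ n) * ∑ k ∈ Finset.Icc 1 n, l k * x k)
    (hs1 : Summable fun n : ℕ => A (n + 1) ^ p)
    (hs2 : Summable fun n : ℕ => x (n + 1) * A (n + 1) ^ (p - 1)) :
    ∑' n : ℕ, A (n + 1) ^ p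
      ≤ (p / (p - L)) * ∑' n : ℕ, x (n + 1) * A (n + 1) ^ (p - 1) := by
  set c : ℝ := p / (p - L) with hcdef
  have hp0 : 0 < p := by linarith
  have hpL : 0 < p - L := by linarith
  have hc : 0 < c := div_pos hp0 hpL
  have hcp : c * (p - L) = p := div_mul_cancel₀ p hpL.ne'
  have hld : ∀ n : ℕ, Λ (n + 2) / l (n + 2) - Λ (n + 1) / l (n + 1) ≤ L :=
    fun n => hL.1 ⟨n, rfl⟩
  have hΛpos : ∀ n, 1 ≤ n → 0 < Λ n := by
    intro n hn
    rw [hΛ]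
    exact Finset.sum_pos (fun k hk => hl k (Finset.mem_Icc.mp hk).1)
      ⟨1, Finset.mem_Icc.mpr ⟨le_refl 1, hn⟩⟩
  have hΛsucc : ∀ n : ℕ, Λ (n + 1) = Λ n + l (n + 1) := by
    intro n
    rw [hΛ, hΛ, Finset.sum_Icc_succ_top (Nat.le_add_left 1 n)]
  have hApos : ∀ n, 1 ≤ n → 0 < A n := by
    intro n hn
    rw [hA n hn]
    refine mul_pos (one_div_pos.mpr (hΛpos n hn)) ?_
    exact Finset.sum_pos (fun k hk => mul_pos (hl k (Finset.mem_Icc.mp hk).1)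
      (hx k (Finset.mem_Icc.mp hk).1))
      ⟨1, Finset.mem_Icc.mpr ⟨le_refl 1, hn⟩⟩
  have hsum : ∀ m, 1 ≤ m → Λ m * A m = ∑ k ∈ Finset.Icc 1 m, l k * x k := by
    intro m hm
    rw [hA m hm, one_div, ← mul_assoc, mul_inv_cancel₀ (hΛpos m hm).ne', one_mul]
  have hlx : ∀ n, 1 ≤ n → l (n + 1) * x (n + 1) = Λ (n + 1) * A (n + 1) - Λ n * A n := by
    intro n hn
    rw [hsum (n + 1) (by omega), hsum n hn,
      Finset.sum_Icc_succ_top (Nat.le_add_left 1 n)]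
    ring
  have hA1 : A 1 = x 1 := by
    have hΛ1 : Λ 1 = l 1 := by rw [hΛ]; simp
    rw [hA 1 le_rfl, hΛ1, Finset.Icc_self, Finset.sum_singleton, ← mul_assoc,
      one_div, inv_mul_cancel₀ (hl 1 le_rfl).ne', one_mul]
  have hpow : ∀ b : ℝ, b ≠ 0 → b ^ (p - 1) * b = b ^ p := by
    intro b hb
    rw [← Real.rpow_add_one hb (p - 1), show p - 1 + 1 = p from by ring]
  -- main induction
  have key : ∀ N, 1 ≤ N →
      (∑ n ∈ Finset.Icc 1 N, A n ^ p) + c / p * (Λ N / l (N + 1)) * A N ^ p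
        ≤ c * ∑ n ∈ Finset.Icc 1 N, x n * A n ^ (p - 1) := by
    intro N hN
    induction N, hN using Nat.le_induction with
    | base =>
      simp only [Finset.Icc_self, Finset.sum_singleton]
      have hA1p : 0 < A 1 := hApos 1 le_rfl
      have hxA : x 1 * A 1 ^ (p - 1) = A 1 ^ p := by
        rw [hA1, ← hpow (x 1) (hx 1 le_rfl).ne']
        ring
      rw [hxA]
      -- Λ 1 / l 2 ≤ L
      have hΛ1 : Λ 1 = l 1 := by rw [hΛ]; simp
      have hΛ2 : Λ 2 = Λ 1 + l 2 := hΛsucc 1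
      have hl1 : 0 < l 1 := hl 1 le_rfl
      have hl2 : 0 < l 2 := hl 2 (by omega)
      have ht : Λ 1 / l 2 ≤ L := by
        have h := hld 0
        norm_num at h
        have e : Λ 2 / l 2 - Λ 1 / l 1 = Λ 1 / l 2 := by
          rw [hΛ2, hΛ1]
          field_simp
          ring
        linarith [h, e]
      have ht0 : 0 < Λ 1 / l 2 := div_pos (hΛpos 1 le_rfl) hl2
      have h2 : c / p * L = c - 1 := by
        rw [div_mul_eq_mul_div, eq_sub_iff_add_eq, div_add' _ _ _ hp0.ne']
        rw [div_eq_iff hp0.ne']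
        nlinarith [hcp]
      have h3 : c / p * (Λ 1 / l 2) ≤ c - 1 := by
        rw [← h2]
        exact mul_le_mul_of_nonneg_left ht (by positivity)
      have hQ : 0 < A 1 ^ p := Real.rpow_pos_of_pos hA1p p
      nlinarith [mul_le_mul_of_nonneg_right h3 hQ.le]
    | succ N hN ih =>
      rw [Finset.sum_Icc_succ_top (by omega : 1 ≤ N + 1),
        Finset.sum_Icc_succ_top (by omega : 1 ≤ N + 1)]
      have ha : 0 < A N := hApos N hN
      have hb : 0 < A (N + 1) := hApos (N + 1) (by omega)
      have hQ : 0 < A (N + 1) ^ p := Real.rpow_pos_of_pos hb p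
      have hRb : A (N + 1) ^ (p - 1) * A (N + 1) = A (N + 1) ^ p :=
        hpow (A (N + 1)) hb.ne'
      have hY := young_aux p (A N) (A (N + 1)) hp ha hb
      have hd : (Λ (N + 1) + l (N + 2)) / l (N + 2) - Λ (N + 1) / l (N + 1) ≤ L := by
        have h := hld N
        rw [hΛsucc (N + 1)] at h
        exact h
      have hstep := step_aux p c L (l (N + 1)) (l (N + 2)) (Λ N) (Λ (N + 1))
        (A N) (A (N + 1)) (A N ^ p) (A (N + 1) ^ p) (A (N + 1) ^ (p - 1)) (x (N + 1))
        hp hc hcp (hl (N + 1) (by omega)) (hl (N + 2) (by omega)) (hΛpos N hN)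
        (hΛsucc N) hd hQ (hlx N hN) hRb hY
      linarith [hstep, ih]
  -- conclude
  have hnn1 : ∀ n : ℕ, 0 ≤ A (n + 1) ^ p :=
    fun n => (Real.rpow_pos_of_pos (hApos (n + 1) (by omega)) p).le
  have hnn2 : ∀ n : ℕ, 0 ≤ x (n + 1) * A (n + 1) ^ (p - 1) :=
    fun n => (mul_pos (hx (n + 1) (by omega))
      (Real.rpow_pos_of_pos (hApos (n + 1) (by omega)) (p - 1))).le
  refine Real.tsum_le_of_sum_range_le hnn1 ?_
  intro N
  rcases Nat.eq_zero_or_pos N with h0 | hN1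
  · subst h0
    simp only [Finset.range_zero, Finset.sum_empty]
    exact mul_nonneg hc.le (tsum_nonneg hnn2)
  · have hkey := key N hN1
    have hbd : 0 ≤ c / p * (Λ N / l (N + 1)) * A N ^ p := by
      have := hΛpos N hN1
      have := hl (N + 1) (by omega)
      have := Real.rpow_pos_of_pos (hApos N hN1) p
      positivity
    calc ∑ n ∈ Finset.range N, A (n + 1) ^ p
        = ∑ n ∈ Finset.Icc 1 N, A n ^ p := sum_range_shift (fun n => A n ^ p) N
      _ ≤ c * ∑ n ∈ Finset.Icc 1 N, x n * A n ^ (p - 1) := by linarith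
      _ = c * ∑ n ∈ Finset.range N, x (n + 1) * A (n + 1) ^ (p - 1) := by
          rw [sum_range_shift (fun n => x n * A n ^ (p - 1)) N]
      _ ≤ c * ∑' n : ℕ, x (n + 1) * A (n + 1) ^ (p - 1) := by
          refine mul_le_mul_of_nonneg_left ?_ hc.le
          exact Summable.sum_le_tsum (Finset.range N) (fun i _ => hnn2 i) hs2
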